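/- arXiv:2407.08636 — 3 statements merged into one kernel-verified Lean document; each statement's English description precedes it below -/
import Mathlib

section
/- Let 0 < δ ≤ 1 and let H, K be positive integers with H ≤ (δ²/4)·K. If f : ℤ → ℂ is a 1-bounded function satisfying |𝔼_{z∈[K]} f(z)| ≥ δ, then Re(𝔼_{h,h'∈[±H]} 𝔼_{z∈[K]} f(z+h)·conj(f(z+h'))) ≥ δ²/4 and Re(Σ_{h∈ℤ} μ_H(h)·𝔼_{z∈[K]} f(z)·conj(f(z+h))) ≥ δ²/4. -/
open Finset

/-- The Fejér kernel at scale `H`. -/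
noncomputable def fejer (H : ℕ) (h : ℤ) : ℝ :=
  (2 * H + 1 : ℝ)⁻¹ * max 0 (1 - |(h : ℝ)| / (2 * H + 1))

section helpers

lemma my_Icc_inter (a b c d : ℤ) : Icc a b ∩ Icc c d = Icc (max a c) (min b d) := by
  ext x; simp [mem_Icc]; omega

lemma my_sum_norm_le_card (s : Finset ℤ) (g : ℤ → ℂ) (hb : ∀ z, ‖g z‖ ≤ 1) :
    ‖∑ z ∈ s, g z‖ ≤ s.card := by
  calc ‖∑ z ∈ s, g z‖ ≤ ∑ z ∈ s, ‖g z‖ := norm_sum_le _ _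
    _ ≤ ∑ z ∈ s, (1:ℝ) := Finset.sum_le_sum fun z _ => hb z
    _ = s.card := by simp

lemma my_sum_shift (u : ℤ → ℂ) (a lo hi lo' hi' : ℤ)
    (h0 : ∀ z, z ∉ Icc lo hi → u z = 0) (hlo : lo' ≤ lo - a) (hhi : hi - a ≤ hi') :
    ∑ z ∈ Icc lo' hi', u (z + a) = ∑ z ∈ Icc lo hi, u z := by
  have h1 : ∑ z ∈ Icc lo' hi', u (z + a) = ∑ z ∈ Icc (lo - a) (hi - a), u (z + a) := by
    refine (Finset.sum_subset ?_ ?_).symm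
    · intro x hx; simp only [mem_Icc] at *; omega
    · intro x hx hx2
      apply h0; simp only [mem_Icc] at *; omega
  rw [h1, show (Icc (lo - a) (hi - a) : Finset ℤ) = (Icc lo hi).map (addRightEmbedding (-a)) by
      rw [map_add_right_Icc]; congr 1 <;> ring, Finset.sum_map]
  apply Finset.sum_congr rfl
  intro x _; congr 1; simp [addRightEmbedding]

lemma my_card_sdiff_Icc (a b c d : ℤ) :
    ((Icc a b \ Icc c d).card : ℤ) = (b + 1 - a).toNat - (min b d + 1 - max a c).toNat := by
  have h := Finset.card_inter_add_card_sdiff (Icc a b) (Icc c d)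
  rw [my_Icc_inter] at h
  rw [Int.card_Icc, Int.card_Icc] at h
  omega

-- ‖∑_{Icc (1+h) (K+h)} f - ∑_{Icc 1 K} f‖ ≤ 2|h| for 1-bounded f, |h| ≤ K
lemma my_shift_diff (f : ℤ → ℂ) (hf : ∀ x, ‖f x‖ ≤ 1) (K h : ℤ) (hK : 0 < K) (hh : |h| ≤ K) :
    ‖∑ z ∈ Icc (1 + h) (K + h), f z - ∑ z ∈ Icc 1 K, f z‖ ≤ 2 * |h| := by
  set S := Icc (1 + h) (K + h)
  set T := Icc (1:ℤ) K
  have e1 : ∑ z ∈ S, f z - ∑ z ∈ T, f z = ∑ z ∈ S \ T, f z - ∑ z ∈ T \ S, f z := by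
    have h1 := Finset.sum_inter_add_sum_sdiff S T f
    have h2 := Finset.sum_inter_add_sum_sdiff T S f
    rw [Finset.inter_comm] at h2
    rw [← h1, ← h2]; ring
  have c1 : ((S \ T).card : ℝ) ≤ |h| := by
    have := my_card_sdiff_Icc (1 + h) (K + h) 1 K
    have : ((S \ T).card : ℤ) ≤ |h| := by
      rw [this]; rcases abs_cases h with ⟨e1, e2⟩ | ⟨e1, e2⟩ <;> omega
    exact_mod_cast this
  have c2 : ((T \ S).card : ℝ) ≤ |h| := by
    have := my_card_sdiff_Icc 1 K (1 + h) (K + h)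
    have : ((T \ S).card : ℤ) ≤ |h| := by
      rw [this]; rcases abs_cases h with ⟨e1, e2⟩ | ⟨e1, e2⟩ <;> omega
    exact_mod_cast this
  rw [e1]
  calc ‖∑ z ∈ S \ T, f z - ∑ z ∈ T \ S, f z‖
      ≤ ‖∑ z ∈ S \ T, f z‖ + ‖∑ z ∈ T \ S, f z‖ := norm_sub_le _ _
    _ ≤ ((S \ T).card : ℝ) + ((T \ S).card : ℝ) := by
        gcongr <;> exact my_sum_norm_le_card _ _ hf
    _ ≤ 2 * |h| := by push_cast at c1 c2 ⊢; linarith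

end helpers

set_option maxHeartbeats 2000000 in
/-- van der Corput inequality, version 2 (Lemma 3.3 of the paper). -/
theorem stmt5 (δ : ℝ) (hδ0 : 0 < δ) (hδ1 : δ ≤ 1) (H K : ℕ) (hH : 0 < H) (hK : 0 < K)
    (hHK : (H : ℝ) ≤ δ ^ 2 / 4 * K)
    (f : ℤ → ℂ) (hf : ∀ x, ‖f x‖ ≤ 1)
    (havg : δ ≤ ‖(∑ z ∈ Finset.Icc (1 : ℤ) (K : ℤ), f z) / (K : ℂ)‖) :
    δ ^ 2 / 4 ≤
      (((2 * (H : ℂ) + 1) ^ 2 * (K : ℂ))⁻¹ *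
        ∑ h ∈ Finset.Icc (-(H : ℤ)) (H : ℤ), ∑ h' ∈ Finset.Icc (-(H : ℤ)) (H : ℤ),
          ∑ z ∈ Finset.Icc (1 : ℤ) (K : ℤ), f (z + h) * (starRingEnd ℂ) (f (z + h'))).re ∧
    δ ^ 2 / 4 ≤
      (∑ᶠ h : ℤ, (fejer H h : ℂ) *
        ((∑ z ∈ Finset.Icc (1 : ℤ) (K : ℤ), f z * (starRingEnd ℂ) (f (z + h))) / (K : ℂ))).re := by
  have hfb : ∀ x, ‖f x‖ ≤ 1 := by simpa using hf
  set Z : Finset ℤ := Finset.Icc (1 : ℤ) K with hZ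
  set I : Finset ℤ := Finset.Icc (-(H : ℤ)) (H : ℤ) with hI
  set N : ℝ := 2 * H + 1 with hN
  set A : ℂ := ∑ z ∈ Z, f z with hA
  have hKpos : (0:ℝ) < K := by exact_mod_cast hK
  have hHpos : (1:ℝ) ≤ H := by exact_mod_cast hH
  have hNpos : 0 < N := by positivity
  have hAnorm : δ * K ≤ ‖A‖ := by
    have h1 : ‖A / K‖ = ‖A‖ / K := by
      rw [norm_div, Complex.norm_natCast]
    rw [h1, le_div_iff₀ hKpos] at havg
    exact havg
  have hδsq : δ ^ 2 ≤ δ := by nlinarith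
  have hHK2 : 2 * (H:ℝ) ≤ δ ^ 2 / 2 * K := by linarith
  have hHKZ : 2 * (H:ℤ) ≤ K := by
    have : 2 * (H:ℝ) ≤ K := by nlinarith
    exact_mod_cast this
  have hgap : δ * K / 2 ≤ δ * K - 2 * H := by nlinarith
  have cardZn : Z.card = K := by rw [hZ, Int.card_Icc]; omega
  have cardIn : I.card = 2 * H + 1 := by rw [hI, Int.card_Icc]; omega
  have cardZ : (Z.card : ℝ) = K := by rw [cardZn]
  have cardI : (I.card : ℝ) = N := by rw [cardIn, hN]; push_cast; ring
  -- shifted sums are close to A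
  have step1 : ∀ h ∈ I, ‖(∑ z ∈ Z, f (z + h)) - A‖ ≤ 2 * (H:ℝ) := by
    intro h hh
    rw [hI, mem_Icc] at hh
    have habs : |h| ≤ (K:ℤ) := by
      rcases abs_cases h with ⟨e1, e2⟩ | ⟨e1, e2⟩ <;> omega
    have e : ∑ z ∈ Z, f (z + h) = ∑ z ∈ Finset.Icc (1 + h) ((K:ℤ) + h), f z := by
      rw [hZ, show (Finset.Icc (1 + h) ((K:ℤ) + h)) = (Finset.Icc (1:ℤ) K).map (addRightEmbedding h)
          by rw [map_add_right_Icc], Finset.sum_map]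
      rfl
    rw [e]
    calc ‖(∑ z ∈ Finset.Icc (1 + h) ((K:ℤ) + h), f z) - A‖ ≤ 2 * |(h:ℝ)| := by
          have := my_shift_diff f hfb K h (by exact_mod_cast hK) habs
          rw [hA, hZ]
          convert this using 3 <;> push_cast <;> ring
      _ ≤ 2 * (H:ℝ) := by
          have : |(h:ℝ)| ≤ (H:ℝ) := by
            rw [abs_le]; constructor <;> push_cast <;> [exact_mod_cast hh.1; exact_mod_cast hh.2]
          linarith
  set g : ℤ → ℂ := fun z => ∑ h ∈ I, f (z + h) with hg
  have step2 : ‖(∑ z ∈ Z, g z) - (N:ℂ) * A‖ ≤ N * (2 * H) := by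
    have e1 : ∑ z ∈ Z, g z = ∑ h ∈ I, ∑ z ∈ Z, f (z + h) := Finset.sum_comm
    have e2 : (N:ℂ) * A = ∑ h ∈ I, A := by
      rw [Finset.sum_const, nsmul_eq_mul, cardIn]
      rw [hN]; push_cast; ring
    rw [e1, e2, ← Finset.sum_sub_distrib]
    calc ‖∑ h ∈ I, ((∑ z ∈ Z, f (z + h)) - A)‖ ≤ ∑ h ∈ I, ‖(∑ z ∈ Z, f (z + h)) - A‖ :=
          norm_sum_le _ _
      _ ≤ ∑ h ∈ I, 2 * (H:ℝ) := Finset.sum_le_sum step1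
      _ = N * (2 * H) := by rw [Finset.sum_const, nsmul_eq_mul, cardI]
  have step3 : N * (δ * K - 2 * H) ≤ ‖∑ z ∈ Z, g z‖ := by
    have h1 := norm_sub_norm_le ((N:ℂ) * A) (∑ z ∈ Z, g z)
    rw [norm_sub_rev] at h1
    have h2 : ‖(N:ℂ) * A‖ = N * ‖A‖ := by
      rw [norm_mul, Complex.norm_real, Real.norm_of_nonneg hNpos.le]
    nlinarith [step2, hAnorm]
  -- Part 1
  constructor
  · have key : ∀ z : ℤ, (∑ h ∈ I, ∑ h' ∈ I, f (z + h) * (starRingEnd ℂ) (f (z + h')))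
        = g z * (starRingEnd ℂ) (g z) := by
      intro z
      rw [hg]
      simp only [map_sum, Finset.sum_mul_sum]
    have eT : (∑ h ∈ I, ∑ h' ∈ I, ∑ z ∈ Z, f (z + h) * (starRingEnd ℂ) (f (z + h')))
        = ∑ z ∈ Z, ((‖g z‖ : ℝ) : ℂ) ^ 2 := by
      calc ∑ h ∈ I, ∑ h' ∈ I, ∑ z ∈ Z, f (z + h) * (starRingEnd ℂ) (f (z + h'))
          = ∑ h ∈ I, ∑ z ∈ Z, ∑ h' ∈ I, f (z + h) * (starRingEnd ℂ) (f (z + h')) :=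
            Finset.sum_congr rfl fun h _ => Finset.sum_comm
        _ = ∑ z ∈ Z, ∑ h ∈ I, ∑ h' ∈ I, f (z + h) * (starRingEnd ℂ) (f (z + h')) :=
            Finset.sum_comm
        _ = ∑ z ∈ Z, ((‖g z‖ : ℝ) : ℂ) ^ 2 := by
            refine Finset.sum_congr rfl fun z _ => ?_
            rw [key z, Complex.mul_conj, Complex.normSq_eq_norm_sq]
            push_cast
            ring
    have reT : (∑ h ∈ I, ∑ h' ∈ I, ∑ z ∈ Z, f (z + h) * (starRingEnd ℂ) (f (z + h'))).re
        = ∑ z ∈ Z, ‖g z‖ ^ 2 := by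
      rw [eT, Complex.re_sum]
      refine Finset.sum_congr rfl fun z _ => ?_
      norm_cast
    have cs : (∑ z ∈ Z, ‖g z‖) ^ 2 ≤ (K:ℝ) * ∑ z ∈ Z, ‖g z‖ ^ 2 := by
      have := Finset.sum_mul_sq_le_sq_mul_sq Z (fun _ => (1:ℝ)) (fun z => ‖g z‖)
      simp only [one_mul, one_pow, Finset.sum_const, nsmul_eq_mul, mul_one] at this
      calc (∑ z ∈ Z, ‖g z‖) ^ 2 ≤ (Z.card : ℝ) * ∑ z ∈ Z, ‖g z‖ ^ 2 := this
        _ = (K:ℝ) * ∑ z ∈ Z, ‖g z‖ ^ 2 := by rw [cardZ]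
    have normle : ‖∑ z ∈ Z, g z‖ ≤ ∑ z ∈ Z, ‖g z‖ := norm_sum_le _ _
    have key2 : (N * (δ * K - 2 * H)) ^ 2 ≤ (K:ℝ) * ∑ z ∈ Z, ‖g z‖ ^ 2 := by
      have h0 : 0 ≤ N * (δ * K - 2 * H) := by nlinarith [mul_pos hδ0 hKpos]
      calc (N * (δ * K - 2 * H)) ^ 2 ≤ ‖∑ z ∈ Z, g z‖ ^ 2 := by
            apply pow_le_pow_left₀ h0 step3
        _ ≤ (∑ z ∈ Z, ‖g z‖) ^ 2 := by
            apply pow_le_pow_left₀ (norm_nonneg _) normle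
        _ ≤ (K:ℝ) * ∑ z ∈ Z, ‖g z‖ ^ 2 := cs
    -- rewrite coefficient
    have coef : ((2 * (H : ℂ) + 1) ^ 2 * (K : ℂ)) = (((N ^ 2 * K : ℝ)) : ℂ) := by
      rw [hN]; push_cast; ring
    rw [coef, ← Complex.ofReal_inv, Complex.re_ofReal_mul, reT]
    have hNK : (0:ℝ) < N ^ 2 * K := by positivity
    have hsq : (δ * K / 2) ^ 2 ≤ (δ * K - 2 * H) ^ 2 :=
      pow_le_pow_left₀ (by positivity) hgap 2
    clear_value N Z I A g
    have final : δ ^ 2 / 4 * (N ^ 2 * K) ≤ ∑ z ∈ Z, ‖g z‖ ^ 2 := by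
      rcases le_or_gt (δ ^ 2 / 4 * (N ^ 2 * (K:ℝ))) (∑ z ∈ Z, ‖g z‖ ^ 2) with hc | hc
      · exact hc
      · exfalso
        have p1 := mul_le_mul_of_nonneg_left hsq (sq_nonneg N)
        have p2 := mul_lt_mul_of_pos_right hc hKpos
        have e1 : N ^ 2 * (δ * (K:ℝ) / 2) ^ 2 = δ ^ 2 / 4 * (N ^ 2 * K) * K := by ring
        have e2 : (N * (δ * (K:ℝ) - 2 * H)) ^ 2 = N ^ 2 * (δ * K - 2 * H) ^ 2 := by ring
        linarith [key2, p1, p2, e1, e2]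
    calc δ ^ 2 / 4 = (N ^ 2 * K)⁻¹ * (δ ^ 2 / 4 * (N ^ 2 * K)) := by
          field_simp
      _ ≤ (N ^ 2 * K)⁻¹ * ∑ z ∈ Z, ‖g z‖ ^ 2 := by gcongr
  · -- Part 2
    set J : Finset ℤ := Finset.Icc (-(2 * H : ℤ)) (2 * H) with hJ
    set F1 : ℤ → ℂ := fun z => if z ∈ Z then f z else 0 with hF1
    have hF1b : ∀ z, ‖F1 z‖ ≤ 1 := by
      intro z; rw [hF1]; dsimp only
      split
      · exact hfb z
      · simp
    have hF10 : ∀ z, z ∉ Z → F1 z = 0 := fun z hz => if_neg hz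
    have sumF1 : ∑ z ∈ Z, F1 z = A := Finset.sum_congr rfl fun z hz => if_pos hz
    set c : ℤ → ℂ := fun h => ∑ z ∈ Z, f z * (starRingEnd ℂ) (f (z + h)) with hcc
    set ct : ℤ → ℂ := fun h => ∑ z ∈ Z, F1 z * (starRingEnd ℂ) (F1 (z + h)) with hct
    set D : ℤ → ℂ := fun a => ∑ z ∈ Z, F1 (z + a) * (starRingEnd ℂ) (F1 z) with hD
    set V : Finset ℤ := Finset.Icc (1 - 2 * (H : ℤ)) ((K : ℤ) + 2 * H) with hV
    set V0 : Finset ℤ := Finset.Icc (1 - (H : ℤ)) ((K : ℤ) + H) with hV0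
    set G : ℤ → ℂ := fun z => ∑ h ∈ I, F1 (z + h) with hG
    have fejer_zero : ∀ h : ℤ, h ∉ J → fejer H h = 0 := by
      intro h hh
      rw [hJ, Finset.mem_Icc] at hh
      have habs : (2 * H : ℤ) < |h| := by
        rcases abs_cases h with ⟨e1, e2⟩ | ⟨e1, e2⟩ <;> omega
      have habsR : (2 * (H:ℝ) + 1) ≤ |(h:ℝ)| := by
        rw [← Int.cast_abs]
        exact_mod_cast habs
      have hmax : 1 - |(h:ℝ)| / (2 * (H:ℝ) + 1) ≤ 0 := by
        rw [sub_nonpos, le_div_iff₀ (by positivity)]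
        linarith
      rw [fejer, max_eq_left hmax, mul_zero]
    have hred : (∑ᶠ h : ℤ, (fejer H h : ℂ) *
        ((∑ z ∈ Z, f z * (starRingEnd ℂ) (f (z + h))) / (K : ℂ)))
        = ∑ h ∈ J, (fejer H h : ℂ) * (c h / (K : ℂ)) := by
      apply finsum_eq_sum_of_support_subset
      intro h hh
      simp only [Function.mem_support] at hh
      by_contra hmem
      exact hh (by rw [fejer_zero h hmem]; simp)
    rw [hred]
    -- counting identity
    have count1 : ∀ h1 ∈ I, ∀ h2 ∈ I, (h1 - h2) ∈ J := by
      intro h1 hh1 h2 hh2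
      rw [hI, Finset.mem_Icc] at hh1 hh2
      rw [hJ, Finset.mem_Icc]
      omega
    have expand : ∑ h1 ∈ I, ∑ h2 ∈ I, D (h1 - h2)
        = ∑ h ∈ J, (((I ∩ Finset.Icc (h - H) (h + H)).card : ℕ) : ℂ) * D h := by
      have e1 : ∀ h1 ∈ I, ∀ h2 ∈ I, D (h1 - h2)
          = ∑ h ∈ J, if h1 - h2 = h then D h else 0 := by
        intro h1 hh1 h2 hh2
        rw [Finset.sum_ite_eq J (h1 - h2) (fun h => D h), if_pos (count1 h1 hh1 h2 hh2)]
      calc ∑ h1 ∈ I, ∑ h2 ∈ I, D (h1 - h2)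
          = ∑ h1 ∈ I, ∑ h2 ∈ I, ∑ h ∈ J, if h1 - h2 = h then D h else 0 :=
            Finset.sum_congr rfl fun h1 hh1 =>
              Finset.sum_congr rfl fun h2 hh2 => e1 h1 hh1 h2 hh2
        _ = ∑ h1 ∈ I, ∑ h ∈ J, ∑ h2 ∈ I, if h1 - h2 = h then D h else 0 :=
            Finset.sum_congr rfl fun h1 _ => Finset.sum_comm
        _ = ∑ h ∈ J, ∑ h1 ∈ I, ∑ h2 ∈ I, if h1 - h2 = h then D h else 0 :=
            Finset.sum_comm
        _ = ∑ h ∈ J, (((I ∩ Finset.Icc (h - H) (h + H)).card : ℕ) : ℂ) * D h := by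
            refine Finset.sum_congr rfl fun h _ => ?_
            have e2 : ∀ h1, (∑ h2 ∈ I, if h1 - h2 = h then D h else 0)
                = if h1 ∈ Finset.Icc (h - (H:ℤ)) (h + H) then D h else 0 := by
              intro h1
              have e3 : (fun h2 => if h1 - h2 = h then D h else 0)
                  = fun h2 => if h1 - h = h2 then D h else 0 :=
                funext fun h2 => if_congr (by omega) rfl rfl
              rw [show (∑ h2 ∈ I, if h1 - h2 = h then D h else 0)
                  = ∑ h2 ∈ I, if h1 - h = h2 then D h else 0 from by rw [e3]]
              rw [Finset.sum_ite_eq I (h1 - h) (fun _ => D h)]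
              refine if_congr ?_ rfl rfl
              rw [hI, Finset.mem_Icc, Finset.mem_Icc]
              omega
            rw [Finset.sum_congr rfl fun h1 _ => e2 h1]
            rw [Finset.sum_ite_mem I (Finset.Icc (h - (H:ℤ)) (h + H)) (fun _ => D h)]
            rw [Finset.sum_const, nsmul_eq_mul]
    have cnt_cast : ∀ h ∈ J, (((I ∩ Finset.Icc (h - H) (h + H)).card : ℕ) : ℝ)
        = N ^ 2 * fejer H h := by
      intro h hh
      rw [hJ, Finset.mem_Icc] at hh
      have habs : |h| ≤ 2 * (H:ℤ) := by
        rcases abs_cases h with ⟨e1, e2⟩ | ⟨e1, e2⟩ <;> omega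
      have hcard : (I ∩ Finset.Icc (h - H) (h + H)).card = (2 * H + 1 - |h|).toNat := by
        rw [hI, my_Icc_inter, Int.card_Icc]
        rcases abs_cases h with ⟨e1, e2⟩ | ⟨e1, e2⟩ <;> omega
      have habsR : |(h:ℝ)| ≤ 2 * (H:ℝ) := by
        rw [← Int.cast_abs]; exact_mod_cast habs
      have hc1 : ((((2 * H + 1 - |h|).toNat : ℕ)) : ℝ) = 2 * (H:ℝ) + 1 - |(h:ℝ)| := by
        have h1 : (((2 * H + 1 - |h|).toNat : ℕ) : ℤ) = 2 * H + 1 - |h| :=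
          Int.toNat_of_nonneg (by omega)
        have h2 : ((((2 * H + 1 - |h|).toNat : ℕ) : ℤ) : ℝ) = ((2 * H + 1 - |h| : ℤ) : ℝ) := by
          exact_mod_cast congrArg (Int.cast : ℤ → ℝ) h1
        push_cast at h2 ⊢
        linarith [h2]
      have hmax : max 0 (1 - |(h:ℝ)| / (2 * (H:ℝ) + 1)) = 1 - |(h:ℝ)| / (2 * (H:ℝ) + 1) := by
        apply max_eq_right
        rw [sub_nonneg, div_le_one (by positivity)]
        linarith
      rw [hcard, hc1, fejer, hmax, hN]
      have hNp : (0:ℝ) < 2 * (H:ℝ) + 1 := by positivity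
      field_simp
    have expand2 : ∑ h ∈ J, (((I ∩ Finset.Icc (h - H) (h + H)).card : ℕ) : ℂ) * D h
        = ((N ^ 2 : ℝ) : ℂ) * ∑ h ∈ J, (fejer H h : ℂ) * D h := by
      rw [Finset.mul_sum]
      refine Finset.sum_congr rfl fun h hh => ?_
      have h1 := cnt_cast h hh
      have h2 : (((I ∩ Finset.Icc (h - H) (h + H)).card : ℕ) : ℂ)
          = ((N ^ 2 * fejer H h : ℝ) : ℂ) := by
        rw [← h1]; push_cast; ring
      rw [h2]; push_cast; ring
    -- shift identity
    have shiftDV : ∀ h1 ∈ I, ∀ h2 ∈ I,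
        ∑ z ∈ V, F1 (z + h1) * (starRingEnd ℂ) (F1 (z + h2)) = D (h1 - h2) := by
      intro h1 hh1 h2 hh2
      rw [hI, Finset.mem_Icc] at hh1 hh2
      have key := my_sum_shift (fun w => F1 (w + (h1 - h2)) * (starRingEnd ℂ) (F1 w)) h2
        1 (K:ℤ) (1 - 2 * (H:ℤ)) ((K:ℤ) + 2 * H)
        (fun w hw => by rw [hF10 w hw, map_zero, mul_zero])
        (by omega) (by omega)
      calc ∑ z ∈ V, F1 (z + h1) * (starRingEnd ℂ) (F1 (z + h2))
          = ∑ z ∈ V, F1 ((z + h2) + (h1 - h2)) * (starRingEnd ℂ) (F1 (z + h2)) := by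
            refine Finset.sum_congr rfl fun z _ => ?_
            rw [show z + h2 + (h1 - h2) = z + h1 by ring]
        _ = ∑ z ∈ Z, F1 (z + (h1 - h2)) * (starRingEnd ℂ) (F1 z) := key
        _ = D (h1 - h2) := rfl
    have Gpos : ∑ h1 ∈ I, ∑ h2 ∈ I, D (h1 - h2)
        = ∑ z ∈ V, ((‖G z‖ : ℝ) : ℂ) ^ 2 := by
      calc ∑ h1 ∈ I, ∑ h2 ∈ I, D (h1 - h2)
          = ∑ h1 ∈ I, ∑ h2 ∈ I, ∑ z ∈ V, F1 (z + h1) * (starRingEnd ℂ) (F1 (z + h2)) :=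
            Finset.sum_congr rfl fun h1 hh1 =>
              Finset.sum_congr rfl fun h2 hh2 => (shiftDV h1 hh1 h2 hh2).symm
        _ = ∑ h1 ∈ I, ∑ z ∈ V, ∑ h2 ∈ I, F1 (z + h1) * (starRingEnd ℂ) (F1 (z + h2)) :=
            Finset.sum_congr rfl fun h1 _ => Finset.sum_comm
        _ = ∑ z ∈ V, ∑ h1 ∈ I, ∑ h2 ∈ I, F1 (z + h1) * (starRingEnd ℂ) (F1 (z + h2)) :=
            Finset.sum_comm
        _ = ∑ z ∈ V, ((‖G z‖ : ℝ) : ℂ) ^ 2 := by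
            refine Finset.sum_congr rfl fun z _ => ?_
            rw [show ∑ h1 ∈ I, ∑ h2 ∈ I, F1 (z + h1) * (starRingEnd ℂ) (F1 (z + h2))
                = G z * (starRingEnd ℂ) (G z) from by
              rw [hG]; simp only [map_sum, Finset.sum_mul_sum]]
            rw [Complex.mul_conj, Complex.normSq_eq_norm_sq]
            push_cast
            ring
    have rePos : (∑ h1 ∈ I, ∑ h2 ∈ I, D (h1 - h2)).re = ∑ z ∈ V, ‖G z‖ ^ 2 := by
      rw [Gpos, Complex.re_sum]
      refine Finset.sum_congr rfl fun z _ => ?_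
      norm_cast
    -- sum of G over V0
    have sumG : ∑ z ∈ V0, G z = (N : ℂ) * A := by
      have e1 : ∑ z ∈ V0, G z = ∑ h ∈ I, ∑ z ∈ V0, F1 (z + h) := Finset.sum_comm
      have e2 : ∀ h ∈ I, ∑ z ∈ V0, F1 (z + h) = A := by
        intro h hh
        rw [hI, Finset.mem_Icc] at hh
        have key := my_sum_shift F1 h 1 (K:ℤ) (1 - (H:ℤ)) ((K:ℤ) + H)
          hF10 (by omega) (by omega)
        rw [hV0, key]
        exact sumF1
      rw [e1, Finset.sum_congr rfl e2, Finset.sum_const, nsmul_eq_mul, cardIn]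
      rw [hN]; push_cast; ring
    have cardV0 : ((V0.card : ℕ) : ℝ) = (K : ℝ) + 2 * H := by
      have h1 : V0.card = K + 2 * H := by rw [hV0, Int.card_Icc]; omega
      rw [h1]; push_cast; ring
    have csG : ‖∑ z ∈ V0, G z‖ ^ 2 ≤ ((K:ℝ) + 2 * H) * ∑ z ∈ V0, ‖G z‖ ^ 2 := by
      have h1 := Finset.sum_mul_sq_le_sq_mul_sq V0 (fun _ => (1:ℝ)) (fun z => ‖G z‖)
      simp only [one_mul, one_pow, Finset.sum_const, nsmul_eq_mul, mul_one] at h1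
      have h2 : ‖∑ z ∈ V0, G z‖ ≤ ∑ z ∈ V0, ‖G z‖ := norm_sum_le _ _
      calc ‖∑ z ∈ V0, G z‖ ^ 2 ≤ (∑ z ∈ V0, ‖G z‖) ^ 2 :=
            pow_le_pow_left₀ (norm_nonneg _) h2 2
        _ ≤ ((V0.card : ℕ) : ℝ) * ∑ z ∈ V0, ‖G z‖ ^ 2 := h1
        _ = ((K:ℝ) + 2 * H) * ∑ z ∈ V0, ‖G z‖ ^ 2 := by rw [cardV0]
    have mono : ∑ z ∈ V0, ‖G z‖ ^ 2 ≤ ∑ z ∈ V, ‖G z‖ ^ 2 := by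
      apply Finset.sum_le_sum_of_subset_of_nonneg
      · rw [hV0, hV]
        apply Finset.Icc_subset_Icc <;> omega
      · intro z _ _; positivity
    have key3 : (N * (δ * K)) ^ 2 ≤ ((K:ℝ) + 2 * H) * ∑ z ∈ V, ‖G z‖ ^ 2 := by
      have h1 : N * (δ * K) ≤ ‖∑ z ∈ V0, G z‖ := by
        rw [sumG, norm_mul, Complex.norm_real, Real.norm_of_nonneg hNpos.le]
        have h3 := mul_le_mul_of_nonneg_left hAnorm hNpos.le
        linarith
      have h0 : (0:ℝ) ≤ N * (δ * K) := by positivity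
      calc (N * (δ * K)) ^ 2 ≤ ‖∑ z ∈ V0, G z‖ ^ 2 := pow_le_pow_left₀ h0 h1 2
        _ ≤ ((K:ℝ) + 2 * H) * ∑ z ∈ V0, ‖G z‖ ^ 2 := csG
        _ ≤ ((K:ℝ) + 2 * H) * ∑ z ∈ V, ‖G z‖ ^ 2 :=
            mul_le_mul_of_nonneg_left mono (by positivity)
    -- relate ct and D
    have ctD : ∀ h, ct h = (starRingEnd ℂ) (D h) := by
      intro h
      rw [hct, hD]
      dsimp only
      rw [map_sum]
      refine Finset.sum_congr rfl fun z _ => ?_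
      rw [map_mul, Complex.conj_conj]
      ring
    have reW1 : (∑ h ∈ J, (fejer H h : ℂ) * ct h).re
        = (∑ h ∈ J, (fejer H h : ℂ) * D h).re := by
      have e1 : ∑ h ∈ J, (fejer H h : ℂ) * ct h
          = (starRingEnd ℂ) (∑ h ∈ J, (fejer H h : ℂ) * D h) := by
        rw [map_sum]
        refine Finset.sum_congr rfl fun h _ => ?_
        rw [map_mul, ctD h, Complex.conj_ofReal]
      rw [e1, Complex.conj_re]
    have combo : N ^ 2 * (∑ h ∈ J, (fejer H h : ℂ) * D h).re = ∑ z ∈ V, ‖G z‖ ^ 2 := by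
      have e1 : ((N ^ 2 : ℝ) : ℂ) * ∑ h ∈ J, (fejer H h : ℂ) * D h
          = ∑ h1 ∈ I, ∑ h2 ∈ I, D (h1 - h2) := by rw [expand, expand2]
      have e2 := congrArg Complex.re e1
      rw [Complex.re_ofReal_mul] at e2
      rw [← rePos, ← e2]
    have key4 : (N * (δ * K)) ^ 2
        ≤ ((K:ℝ) + 2 * H) * (N ^ 2 * (∑ h ∈ J, (fejer H h : ℂ) * ct h).re) := by
      rw [reW1, combo]
      exact key3
    -- error term
    have fejer_nonneg : ∀ h : ℤ, 0 ≤ fejer H h := by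
      intro h
      rw [fejer]
      exact mul_nonneg (by positivity) (le_max_left _ _)
    have fejer_mul : ∀ h : ℤ, fejer H h * |(h:ℝ)| ≤ 1 / 4 := by
      intro h
      set t : ℝ := |(h:ℝ)| with htt
      have ht0 : (0:ℝ) ≤ t := abs_nonneg _
      have hNp : (0:ℝ) < 2 * (H:ℝ) + 1 := by positivity
      rcases le_or_gt (1 - t / (2 * (H:ℝ) + 1)) 0 with hmx | hmx
      · rw [fejer, max_eq_left hmx, mul_zero, zero_mul]; norm_num
      · rw [fejer, max_eq_right hmx.le]
        have e1 : (2 * (H:ℝ) + 1)⁻¹ * (1 - t / (2 * (H:ℝ) + 1)) * t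
            = (2 * (H:ℝ) + 1 - t) * t / ((2 * (H:ℝ) + 1) ^ 2) := by
          rw [eq_div_iff (by positivity : ((2 * (H:ℝ) + 1) ^ 2) ≠ 0)]
          field_simp
        rw [e1, div_le_iff₀ (by positivity)]
        nlinarith [sq_nonneg (2 * (H:ℝ) + 1 - 2 * t)]
    have err : ∀ h ∈ J, ‖c h - ct h‖ ≤ |(h:ℝ)| := by
      intro h hh
      rw [hJ, Finset.mem_Icc] at hh
      have hsub : c h - ct h = ∑ z ∈ Z, (f z * (starRingEnd ℂ) (f (z + h))
          - F1 z * (starRingEnd ℂ) (F1 (z + h))) := by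
        rw [hcc, hct]; dsimp only; rw [Finset.sum_sub_distrib]
      have hterm : ∀ z ∈ Z, ‖f z * (starRingEnd ℂ) (f (z + h))
          - F1 z * (starRingEnd ℂ) (F1 (z + h))‖ ≤ if z + h ∈ Z then 0 else 1 := by
        intro z hz
        rw [show F1 z = f z from if_pos hz]
        split_ifs with hzh
        · rw [show F1 (z + h) = f (z + h) from if_pos hzh, sub_self, norm_zero]
        · rw [hF10 _ hzh, map_zero, mul_zero, sub_zero, norm_mul]
          have hc1 : ‖(starRingEnd ℂ) (f (z + h))‖ = ‖f (z + h)‖ := norm_star _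
          rw [hc1]
          calc ‖f z‖ * ‖f (z + h)‖ ≤ 1 * 1 :=
                mul_le_mul (hfb z) (hfb _) (norm_nonneg _) zero_le_one
            _ = 1 := mul_one 1
      have hfilter : Z.filter (fun z => z + h ∉ Z) = Z \ Finset.Icc (1 - h) ((K:ℤ) - h) := by
        rw [hZ]
        ext z
        simp only [Finset.mem_filter, Finset.mem_sdiff, Finset.mem_Icc]
        omega
      have hcard : ((Z \ Finset.Icc (1 - h) ((K:ℤ) - h)).card : ℤ) ≤ |h| := by
        rw [hZ]
        rw [my_card_sdiff_Icc 1 (K:ℤ) (1 - h) ((K:ℤ) - h)]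
        rcases abs_cases h with ⟨e1, e2⟩ | ⟨e1, e2⟩ <;> omega
      calc ‖c h - ct h‖ ≤ ∑ z ∈ Z, ‖f z * (starRingEnd ℂ) (f (z + h))
              - F1 z * (starRingEnd ℂ) (F1 (z + h))‖ := by
            rw [hsub]; exact norm_sum_le _ _
        _ ≤ ∑ z ∈ Z, (if z + h ∈ Z then (0:ℝ) else 1) := Finset.sum_le_sum hterm
        _ = ((Z.filter (fun z => z + h ∉ Z)).card : ℝ) := by
            rw [Finset.sum_ite, Finset.sum_const, Finset.sum_const]
            simp
        _ ≤ |(h:ℝ)| := by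
            rw [hfilter, ← Int.cast_abs]
            exact_mod_cast hcard
    have cardJ : ((J.card : ℕ) : ℝ) = 4 * H + 1 := by
      have h1 : J.card = 4 * H + 1 := by rw [hJ, Int.card_Icc]; omega
      rw [h1]; push_cast; ring
    have W2bound : ‖∑ h ∈ J, (fejer H h : ℂ) * (c h - ct h)‖ ≤ 3 / 2 * H := by
      calc ‖∑ h ∈ J, (fejer H h : ℂ) * (c h - ct h)‖
          ≤ ∑ h ∈ J, ‖(fejer H h : ℂ) * (c h - ct h)‖ := norm_sum_le _ _
        _ ≤ ∑ h ∈ J, (1/4 : ℝ) := by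
            refine Finset.sum_le_sum fun h hh => ?_
            rw [norm_mul, Complex.norm_real, Real.norm_of_nonneg (fejer_nonneg h)]
            calc fejer H h * ‖c h - ct h‖ ≤ fejer H h * |(h:ℝ)| :=
                  mul_le_mul_of_nonneg_left (err h hh) (fejer_nonneg h)
              _ ≤ 1/4 := fejer_mul h
        _ = ((J.card : ℕ) : ℝ) * (1/4) := by rw [Finset.sum_const, nsmul_eq_mul]
        _ ≤ 3/2 * H := by rw [cardJ]; linarith
    have W2re : -(3/2*(H:ℝ)) ≤ (∑ h ∈ J, (fejer H h : ℂ) * (c h - ct h)).re := by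
      have h1 := Complex.abs_re_le_norm (∑ h ∈ J, (fejer H h : ℂ) * (c h - ct h))
      have h2 := abs_le.mp (h1.trans W2bound)
      linarith [h2.1]
    have Wsplit : (∑ h ∈ J, (fejer H h : ℂ) * (c h / (K:ℂ)))
        = (((K:ℝ)⁻¹ : ℝ) : ℂ) * ((∑ h ∈ J, (fejer H h : ℂ) * ct h)
            + ∑ h ∈ J, (fejer H h : ℂ) * (c h - ct h)) := by
      rw [← Finset.sum_add_distrib, Finset.mul_sum]
      refine Finset.sum_congr rfl fun h _ => ?_
      have hcast : (((K:ℝ)⁻¹ : ℝ) : ℂ) = (K:ℂ)⁻¹ := by push_cast; ring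
      rw [hcast]
      ring
    rw [Wsplit, Complex.re_ofReal_mul, Complex.add_re]
    have hKH : (0:ℝ) < (K:ℝ) + 2 * H := by positivity
    have hN2 : (0:ℝ) < N ^ 2 := by positivity
    set W1 : ℝ := (∑ h ∈ J, (fejer H h : ℂ) * ct h).re with hW1
    set W2 : ℝ := (∑ h ∈ J, (fejer H h : ℂ) * (c h - ct h)).re with hW2
    have L1 : δ ^ 2 * (K:ℝ) ^ 2 ≤ W1 * ((K:ℝ) + 2 * H) := by
      rcases le_or_gt (δ ^ 2 * (K:ℝ) ^ 2) (W1 * ((K:ℝ) + 2 * H)) with hcon | hcon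
      · exact hcon
      · exfalso
        have p1 := mul_lt_mul_of_pos_right hcon hN2
        have e1 : (N * (δ * (K:ℝ))) ^ 2 = δ ^ 2 * (K:ℝ) ^ 2 * N ^ 2 := by ring
        have e2 : ((K:ℝ) + 2 * H) * (N ^ 2 * W1) = W1 * ((K:ℝ) + 2 * H) * N ^ 2 := by ring
        linarith only [key4, p1, e1, e2]
    have hδ2le : δ ^ 2 ≤ 1 := by nlinarith
    have final : δ ^ 2 / 4 * K ≤ W1 + W2 := by
      rcases le_or_gt (δ ^ 2 / 4 * (K:ℝ)) (W1 + W2) with hcon | hcon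
      · exact hcon
      · exfalso
        have p0 := mul_lt_mul_of_pos_right hcon hKH
        have p4 := mul_le_mul_of_nonneg_right W2re hKH.le
        have p1 : (H:ℝ) * K ≤ δ^2/4 * K * K := mul_le_mul_of_nonneg_right hHK (by positivity)
        have p2 : (H:ℝ) * H ≤ δ^2/4 * K * H :=
          mul_le_mul_of_nonneg_right hHK (by positivity)
        have p3 : δ^2/4 * K * H ≤ δ^2/4 * K * (δ^2/4 * K) :=
          mul_le_mul_of_nonneg_left hHK (by positivity)
        have p5 : δ^2 * (δ * K)^2 ≤ 1 * (δ * K)^2 :=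
          mul_le_mul_of_nonneg_right hδ2le (sq_nonneg _)
        have q0 : (0:ℝ) < δ ^ 2 * (K:ℝ) ^ 2 := by positivity
        linarith only [L1, p0, p4, p1, p2, p3, p5, q0]
    calc δ ^ 2 / 4 = (K:ℝ)⁻¹ * (δ ^ 2 / 4 * K) := by field_simp
      _ ≤ (K:ℝ)⁻¹ * (W1 + W2) := mul_le_mul_of_nonneg_left final (by positivity)
end

section
/- Let ℓ ≥ 2 be an integer. There exists a constant C > 0 depending only on ℓ such that for all positive integers h_1, …, h_ℓ, all M ∈ ℕ, and all t ∈ ℤ, the number of tuples (m_1, …, m_{ℓ−1}) ∈ [±M]^{ℓ−1} with h_1·m_1 + ⋯ + h_{ℓ−1}·m_{ℓ−1} ≡ t (mod h_ℓ) is at most C·(M^{ℓ−1}·gcd(h_1, …, h_ℓ)/h_ℓ + M^{ℓ−2}). -/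
open Finset

set_option maxHeartbeats 800000



lemma count_ap (r : ℤ) (hr : 0 < r) (A B c : ℤ) (hAB : A ≤ B) :
    (((Finset.Icc A B).filter (fun x => r ∣ x - c)).card : ℤ) * r ≤ B - A + r := by
  classical
  set S := (Finset.Icc A B).filter (fun x => r ∣ x - c) with hS
  have hmaps : ∀ x ∈ S, (x - c) / r ∈ Finset.Icc (-((c - A)/r)) ((B - c)/r) := by
    intro x hx
    rw [hS, Finset.mem_filter, Finset.mem_Icc] at hx
    obtain ⟨⟨h1, h2⟩, hdvd⟩ := hx
    have hk : (x - c) / r * r = x - c := Int.ediv_mul_cancel hdvd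
    rw [Finset.mem_Icc]
    constructor
    · rw [neg_le, Int.le_ediv_iff_mul_le hr]
      linarith
    · rw [Int.le_ediv_iff_mul_le hr]
      linarith
  have hinj : Set.InjOn (fun x => (x - c) / r) S := by
    intro x hx y hy hxy
    have hx2 := Finset.mem_coe.mp hx
    have hy2 := Finset.mem_coe.mp hy
    rw [hS, Finset.mem_filter] at hx2 hy2
    have hx' : (x - c) / r * r = x - c := Int.ediv_mul_cancel hx2.2
    have hy' : (y - c) / r * r = y - c := Int.ediv_mul_cancel hy2.2
    simp only at hxy
    have : x - c = y - c := by rw [← hx', ← hy', hxy]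
    linarith
  have hcard : S.card ≤ (Finset.Icc (-((c - A)/r)) ((B - c)/r)).card :=
    Finset.card_le_card_of_injOn _ hmaps hinj
  have hIcc : ((Finset.Icc (-((c - A)/r)) ((B - c)/r)).card : ℤ)
      = ((B - c)/r + 1 + ((c - A)/r)).toNat := by
    rw [Int.card_Icc]; ring_nf
  have f1 : (B - c)/r * r ≤ B - c := Int.ediv_mul_le _ hr.ne'
  have f2 : (c - A)/r * r ≤ c - A := Int.ediv_mul_le _ hr.ne'
  rcases le_or_gt ((B - c)/r + 1 + ((c - A)/r)) 0 with hz | hz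
  · have : S.card = 0 := by
      have := hcard
      rw [Int.card_Icc] at this
      omega
    rw [this]
    push_cast
    linarith
  · have hc2 : (S.card : ℤ) ≤ (B - c)/r + 1 + ((c - A)/r) := by
      have h3 : (S.card : ℤ) ≤ ((Finset.Icc (-((c - A)/r)) ((B - c)/r)).card : ℤ) := by
        exact_mod_cast hcard
      rw [hIcc] at h3
      rwa [Int.toNat_of_nonneg hz.le] at h3
    calc (S.card : ℤ) * r ≤ ((B - c)/r + 1 + ((c - A)/r)) * r :=
          mul_le_mul_of_nonneg_right hc2 hr.le
      _ = (B - c)/r * r + (c - A)/r * r + r := by ring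
      _ ≤ B - A + r := by linarith


lemma count_lin (q : ℤ) (hq : 0 < q) (a : ℤ) (ha : 0 < a) (t : ℤ) (M : ℕ) :
    (((Finset.Icc (-(M:ℤ)) (M:ℤ)).filter (fun x => q ∣ a * x - t)).card : ℤ) * q
      ≤ 2 * (M : ℤ) * gcd a q + q := by
  classical
  set d : ℤ := gcd a q with hd
  have hdvda : d ∣ a := gcd_dvd_left a q
  have hdvdq : d ∣ q := gcd_dvd_right a q
  have hdpos : 0 < d := by
    have : d = ↑(Int.gcd a q) := (Int.coe_gcd a q).symm
    rw [this]
    exact_mod_cast Int.gcd_pos_of_ne_zero_right a hq.ne'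
  have hdnn : (0:ℤ) ≤ 2 * (M:ℤ) * d := by positivity
  set S := (Finset.Icc (-(M:ℤ)) (M:ℤ)).filter (fun x => q ∣ a * x - t) with hS
  rcases S.eq_empty_or_nonempty with he | ⟨x₀, hx₀⟩
  · rw [he]
    simp
    linarith
  · set r : ℤ := q / d with hr
    have hrd : d * r = q := Int.mul_ediv_cancel' hdvdq
    have hrpos : 0 < r := by nlinarith
    have hx₀' := hx₀
    rw [hS, Finset.mem_filter] at hx₀'
    have key : ∀ x ∈ S, r ∣ x - x₀ := by
      intro x hx
      rw [hS, Finset.mem_filter] at hx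
      have h1 : q ∣ a * (x - x₀) := by
        have := dvd_sub hx.2 hx₀'.2
        have h2 : (a * x - t) - (a * x₀ - t) = a * (x - x₀) := by ring
        rwa [h2] at this
      -- q = d * r, a = d * a'
      obtain ⟨a', ha'⟩ := hdvda
      have h3 : d * r ∣ d * (a' * (x - x₀)) := by
        rw [hrd, ← mul_assoc, ← ha']
        exact h1
      have h4 : r ∣ a' * (x - x₀) := (mul_dvd_mul_iff_left hdpos.ne').mp h3
      have hcop : IsCoprime r a' := by
        rw [Int.isCoprime_iff_gcd_eq_one]
        have hgpos : 0 < Int.gcd a q := Int.gcd_pos_of_ne_zero_right a hq.ne'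
        have hgd : (Int.gcd a q : ℤ) = d := Int.coe_gcd a q
        have ha'' : a' = a / d := by
          rw [ha', Int.mul_ediv_cancel_left _ hdpos.ne']
        have hmain := Int.gcd_div_gcd_div_gcd hgpos
        rw [hgd] at hmain
        rw [hr, ha'', Int.gcd_comm]
        exact hmain
      exact hcop.dvd_of_dvd_mul_left h4
    have hsub : S ⊆ (Finset.Icc (-(M:ℤ)) (M:ℤ)).filter (fun x => r ∣ x - x₀) := by
      intro x hx
      rw [Finset.mem_filter]
      refine ⟨?_, key x hx⟩
      rw [hS, Finset.mem_filter] at hx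
      exact hx.1
    have hc := Finset.card_le_card hsub
    have hap := count_ap r hrpos (-(M:ℤ)) (M:ℤ) x₀ (by omega)
    have hc2 : (S.card : ℤ) * r ≤ (M:ℤ) - (-(M:ℤ)) + r := by
      calc (S.card : ℤ) * r ≤ ((((Finset.Icc (-(M:ℤ)) (M:ℤ)).filter (fun x => r ∣ x - x₀)).card : ℤ)) * r := by
            apply mul_le_mul_of_nonneg_right _ hrpos.le
            exact_mod_cast hc
        _ ≤ (M:ℤ) - (-(M:ℤ)) + r := hap
    have := mul_le_mul_of_nonneg_right hc2 hdpos.le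
    calc (S.card : ℤ) * q = (S.card : ℤ) * r * d := by rw [mul_assoc, mul_comm r d, hrd]
      _ ≤ ((M:ℤ) - (-(M:ℤ)) + r) * d := this
      _ = 2 * (M:ℤ) * d + r * d := by ring
      _ = 2 * (M:ℤ) * d + q := by rw [mul_comm r d, hrd]

lemma int_gcd_pos (a b : ℤ) (hb : 0 < b) : 0 < gcd a b := by
  rw [← Int.coe_gcd]
  exact_mod_cast Int.gcd_pos_of_ne_zero_right a hb.ne'



lemma int_gcd_nonneg (a b : ℤ) : 0 ≤ gcd a b := by
  rw [← Int.coe_gcd]; positivity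

lemma fgcd_nonneg {n : ℕ} (h : Fin n → ℤ) : 0 ≤ Finset.univ.gcd h := by
  induction (Finset.univ : Finset (Fin n)) using Finset.induction with
  | empty => simp
  | insert hx ih =>
    rw [Finset.gcd_insert]
    exact int_gcd_nonneg _ _

lemma gcd_decomp (n : ℕ) (h : Fin (n+1) → ℤ) :
    Finset.univ.gcd h
      = gcd (Finset.univ.gcd (fun i : Fin n => h i.castSucc)) (h (Fin.last n)) := by
  apply Int.dvd_antisymm (fgcd_nonneg h) (int_gcd_nonneg _ _)
  · apply GCDMonoid.dvd_gcd
    · apply Finset.dvd_gcd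
      intro i _
      exact Finset.gcd_dvd (Finset.mem_univ _)
    · exact Finset.gcd_dvd (Finset.mem_univ _)
  · apply Finset.dvd_gcd
    intro i _
    induction i using Fin.lastCases with
    | last => exact gcd_dvd_right _ _
    | cast j =>
      exact dvd_trans (gcd_dvd_left _ _) (Finset.gcd_dvd (Finset.mem_univ j))

lemma aux_bound : ∀ n : ℕ, 1 ≤ n → ∀ (h : Fin n → ℤ), (∀ i, 0 < h i) →
    ∀ q : ℤ, 0 < q → ∀ (M : ℕ), 0 < M → ∀ t : ℤ,
    ((Finset.filter (fun m => q ∣ (∑ i, h i * m i) - t)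
        (Fintype.piFinset fun _ : Fin n => Finset.Icc (-(M:ℤ)) (M:ℤ))).card : ℤ) * q
      ≤ 4 ^ n * ((M:ℤ) ^ n * gcd (Finset.univ.gcd h) q + (M:ℤ) ^ (n - 1) * q) := by
  intro n hn
  induction n, hn using Nat.le_induction with
  | base =>
    intro h hh q hq M hM t
    have hg0 : Finset.univ.gcd h = h 0 := by
      have : Finset.univ.gcd h = normalize (h 0) := by simp [Finset.gcd]
      rw [this, Int.normalize_of_nonneg (hh 0).le]
    have hcard : (Finset.filter (fun m => q ∣ (∑ i, h i * m i) - t)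
          (Fintype.piFinset fun _ : Fin 1 => Finset.Icc (-(M:ℤ)) (M:ℤ))).card
        ≤ ((Finset.Icc (-(M:ℤ)) (M:ℤ)).filter (fun x => q ∣ h 0 * x - t)).card := by
      apply Finset.card_le_card_of_injOn (fun m => m 0)
      · intro m hm
        rw [Finset.mem_coe, Finset.mem_filter] at hm ⊢
        rw [Fintype.mem_piFinset] at hm
        refine ⟨hm.1 0, ?_⟩
        have : ∑ i, h i * m i = h 0 * m 0 := Fin.sum_univ_one _
        rw [← this]
        exact hm.2
      · intro m₁ _ m₂ _ he
        funext i
        have : i = 0 := Subsingleton.elim i 0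
        rw [this]
        exact he
    have h1 : ((Finset.filter (fun m => q ∣ (∑ i, h i * m i) - t)
          (Fintype.piFinset fun _ : Fin 1 => Finset.Icc (-(M:ℤ)) (M:ℤ))).card : ℤ) * q
        ≤ 2 * (M : ℤ) * gcd (h 0) q + q := by
      refine le_trans (mul_le_mul_of_nonneg_right ?_ hq.le) (count_lin q hq (h 0) (hh 0) t M)
      exact_mod_cast hcard
    rw [hg0]
    have hmg : (0:ℤ) ≤ (M:ℤ) * gcd (h 0) q := mul_nonneg (by positivity) (int_gcd_nonneg _ _)
    have : (4:ℤ) ^ 1 * ((M:ℤ) ^ 1 * gcd (h 0) q + (M:ℤ) ^ (1 - 1) * q)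
        = 4 * ((M:ℤ) * gcd (h 0) q) + 4 * q := by ring
    rw [this]
    linarith
  | succ n hn IH =>
    intro h hh q hq M hM t
    classical
    set a : ℤ := h (Fin.last n) with ha_def
    set h' : Fin n → ℤ := fun i => h i.castSucc with hh'_def
    set d : ℤ := gcd a q with hd_def
    have hdpos : 0 < d := int_gcd_pos a q hq
    have hda : d ∣ a := gcd_dvd_left a q
    have hdq : d ∣ q := gcd_dvd_right a q
    have hdleq : d ≤ q := Int.le_of_dvd hq hdq
    set A := Finset.filter (fun m => q ∣ (∑ i, h i * m i) - t)
        (Fintype.piFinset fun _ : Fin (n+1) => Finset.Icc (-(M:ℤ)) (M:ℤ)) with hA_def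
    set T := Finset.filter (fun m => d ∣ (∑ i, h' i * m i) - t)
        (Fintype.piFinset fun _ : Fin n => Finset.Icc (-(M:ℤ)) (M:ℤ)) with hT_def
    have hsum : ∀ m : Fin (n+1) → ℤ,
        ∑ i, h i * m i = (∑ i : Fin n, h' i * (Fin.init m) i) + a * m (Fin.last n) := by
      intro m
      rw [Fin.sum_univ_castSucc]
      rfl
    -- fibers
    have hmem : ∀ m ∈ A, Fin.init m ∈ T := by
      intro m hm
      rw [hA_def, Finset.mem_filter, Fintype.mem_piFinset] at hm
      rw [hT_def, Finset.mem_filter, Fintype.mem_piFinset]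
      constructor
      · intro i
        exact hm.1 i.castSucc
      · have h1 : d ∣ (∑ i, h i * m i) - t := dvd_trans hdq hm.2
        have h2 : d ∣ a * m (Fin.last n) := Dvd.dvd.mul_right hda _
        have h3 : (∑ i : Fin n, h' i * (Fin.init m) i) - t
            = ((∑ i, h i * m i) - t) - a * m (Fin.last n) := by
          rw [hsum m]; ring
        rw [h3]
        exact dvd_sub h1 h2
    have hfib := Finset.card_eq_sum_card_fiberwise hmem
    -- per-fiber bound
    have hfible : ∀ m' ∈ T,
        ((A.filter (fun m => Fin.init m = m')).card : ℤ) * q ≤ 2 * (M:ℤ) * d + q := by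
      intro m' hm'
      have hle : (A.filter (fun m => Fin.init m = m')).card
          ≤ ((Finset.Icc (-(M:ℤ)) (M:ℤ)).filter
              (fun x => q ∣ a * x - (t - ∑ i, h' i * m' i))).card := by
        apply Finset.card_le_card_of_injOn (fun m => m (Fin.last n))
        · intro m hm
          rw [Finset.mem_coe, Finset.mem_filter] at hm
          obtain ⟨hmA, hinit⟩ := hm
          rw [hA_def, Finset.mem_filter, Fintype.mem_piFinset] at hmA
          rw [Finset.mem_coe, Finset.mem_filter]
          refine ⟨hmA.1 (Fin.last n), ?_⟩
          have h4 : a * m (Fin.last n) - (t - ∑ i, h' i * m' i)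
              = (∑ i, h i * m i) - t := by
            rw [hsum m, hinit]; ring
          rw [h4]
          exact hmA.2
        · intro m₁ hm₁ m₂ hm₂ he
          have h₁ := (Finset.mem_filter.mp (Finset.mem_coe.mp hm₁)).2
          have h₂ := (Finset.mem_filter.mp (Finset.mem_coe.mp hm₂)).2
          rw [← Fin.snoc_init_self m₁, ← Fin.snoc_init_self m₂, h₁, h₂]
          simp only at he
          rw [he]
      refine le_trans (mul_le_mul_of_nonneg_right ?_ hq.le)
        (count_lin q hq a (hh _) (t - ∑ i, h' i * m' i) M)
      exact_mod_cast hle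
    -- combine
    have hAq : (A.card : ℤ) * q ≤ (T.card : ℤ) * (2 * (M:ℤ) * d + q) := by
      rw [hfib]
      push_cast
      rw [Finset.sum_mul]
      calc ∑ m' ∈ T, ((A.filter (fun m => Fin.init m = m')).card : ℤ) * q
          ≤ ∑ m' ∈ T, (2 * (M:ℤ) * d + q) := Finset.sum_le_sum hfible
        _ = (T.card : ℤ) * (2 * (M:ℤ) * d + q) := by
            rw [Finset.sum_const, nsmul_eq_mul]
    have hT := IH h' (fun i => hh _) d hdpos M hM t
    rw [← hT_def] at hT
    -- gcd identification
    set G : ℤ := gcd (Finset.univ.gcd h) q with hG_def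
    have hGG : gcd (Finset.univ.gcd h') d = G := by
      rw [hG_def, hd_def, gcd_decomp n h, gcd_assoc, hh'_def, ha_def]
    rw [hGG] at hT
    have hGpos : 0 < G := int_gcd_pos _ q hq
    have hGd : G ∣ d := by rw [← hGG]; exact gcd_dvd_right _ _
    have hGled : G ≤ d := Int.le_of_dvd hdpos hGd
    -- arithmetic
    set P' : ℤ := (M:ℤ) ^ (n - 1) with hP'_def
    have hM1 : (1:ℤ) ≤ (M:ℤ) := by exact_mod_cast hM
    have hP'0 : 0 < P' := by positivity
    have e2 : (M:ℤ) ^ n = P' * (M:ℤ) := by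
      rw [hP'_def, ← pow_succ]
      congr 1
      omega
    have e1 : (M:ℤ) ^ (n+1) = P' * (M:ℤ) * (M:ℤ) := by
      rw [hP'_def, ← pow_succ, ← pow_succ]
      congr 1
      omega
    rw [e2] at hT
    have hK0 : (0:ℤ) ≤ (A.card : ℤ) := by positivity
    have hN0 : (0:ℤ) ≤ (T.card : ℤ) := by positivity
    have hB0 : (0:ℤ) ≤ 2 * (M:ℤ) * d + q := by positivity
    have hc0 : (0:ℤ) < 4 ^ n := by positivity
    have hKqd : (A.card : ℤ) * q * d
        ≤ (4:ℤ) ^ n * ((P' * (M:ℤ) * G + P' * d) * (2 * (M:ℤ) * d + q)) := by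
      calc (A.card : ℤ) * q * d ≤ (T.card : ℤ) * (2 * (M:ℤ) * d + q) * d :=
            mul_le_mul_of_nonneg_right hAq hdpos.le
        _ = ((T.card : ℤ) * d) * (2 * (M:ℤ) * d + q) := by ring
        _ ≤ (4 ^ n * (P' * (M:ℤ) * G + P' * d)) * (2 * (M:ℤ) * d + q) :=
            mul_le_mul_of_nonneg_right hT hB0
        _ = (4:ℤ) ^ n * ((P' * (M:ℤ) * G + P' * d) * (2 * (M:ℤ) * d + q)) := by ring
    have k1 : P' * (M:ℤ) * G * q ≤ P' * (M:ℤ) * d * q := by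
      have h5 : P' * (M:ℤ) * G ≤ P' * (M:ℤ) * d :=
        mul_le_mul_of_nonneg_left hGled (by positivity)
      exact mul_le_mul_of_nonneg_right h5 hq.le
    have k2 : P' * (M:ℤ) * d * d ≤ P' * (M:ℤ) * d * q :=
      mul_le_mul_of_nonneg_left hdleq (by positivity)
    have k3 : P' * d * q ≤ P' * (M:ℤ) * d * q := by
      have h5 : P' * 1 ≤ P' * (M:ℤ) := mul_le_mul_of_nonneg_left hM1 hP'0.le
      have h6 := mul_le_mul_of_nonneg_right h5 (mul_nonneg hdpos.le hq.le)
      calc P' * d * q = P' * 1 * (d * q) := by ring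
        _ ≤ P' * (M:ℤ) * (d * q) := h6
        _ = P' * (M:ℤ) * d * q := by ring
    have k4 : (0:ℤ) ≤ P' * (M:ℤ) * (M:ℤ) * G * d := by positivity
    have hmid : (P' * (M:ℤ) * G + P' * d) * (2 * (M:ℤ) * d + q)
        ≤ 4 * ((P' * (M:ℤ) * (M:ℤ)) * G + (P' * (M:ℤ)) * q) * d := by
      nlinarith [k1, k2, k3, k4]
    have hfin : (A.card : ℤ) * q * d
        ≤ (4:ℤ) ^ (n+1) * ((P' * (M:ℤ) * (M:ℤ)) * G + (P' * (M:ℤ)) * q) * d := by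
      calc (A.card : ℤ) * q * d
          ≤ (4:ℤ) ^ n * ((P' * (M:ℤ) * G + P' * d) * (2 * (M:ℤ) * d + q)) := hKqd
        _ ≤ (4:ℤ) ^ n * (4 * ((P' * (M:ℤ) * (M:ℤ)) * G + (P' * (M:ℤ)) * q) * d) :=
            mul_le_mul_of_nonneg_left hmid hc0.le
        _ = (4:ℤ) ^ (n+1) * ((P' * (M:ℤ) * (M:ℤ)) * G + (P' * (M:ℤ)) * q) * d := by ring
    have := le_of_mul_le_mul_right hfin hdpos
    rw [show (n+1) - 1 = n from rfl, e1, e2]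
    exact this

/-- Bound on the number of solutions to a linear congruence (Lemma 6.1 of the paper).
Here `ℓ = n + 1 ≥ 2`. -/
theorem stmt15 (n : ℕ) (hn : 1 ≤ n) :
    ∃ C : ℝ, 0 < C ∧
      ∀ (h : Fin (n + 1) → ℤ), (∀ i, 0 < h i) →
      ∀ (M : ℕ), 0 < M → ∀ t : ℤ,
        (Set.ncard {m : Fin n → ℤ |
            (∀ i, -(M : ℤ) ≤ m i ∧ m i ≤ (M : ℤ)) ∧
            h (Fin.last n) ∣ ((∑ i : Fin n, h i.castSucc * m i) - t)} : ℝ) ≤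
          C * ((M : ℝ) ^ n * (((Finset.univ.gcd h : ℤ) : ℝ)) / (h (Fin.last n) : ℝ) +
            (M : ℝ) ^ (n - 1)) := by
  refine ⟨4 ^ n, by positivity, ?_⟩
  intro h hh M hM t
  have hq : (0:ℤ) < h (Fin.last n) := hh _
  set q : ℤ := h (Fin.last n) with hq_def
  set h' : Fin n → ℤ := fun i => h i.castSucc with hh'_def
  have hset : {m : Fin n → ℤ |
        (∀ i, -(M : ℤ) ≤ m i ∧ m i ≤ (M : ℤ)) ∧
        q ∣ ((∑ i : Fin n, h i.castSucc * m i) - t)}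
      = ↑(Finset.filter (fun m => q ∣ (∑ i, h' i * m i) - t)
          (Fintype.piFinset fun _ : Fin n => Finset.Icc (-(M:ℤ)) (M:ℤ))) := by
    ext m
    simp only [Set.mem_setOf_eq, Finset.coe_filter, Fintype.mem_piFinset, Finset.mem_Icc,
      hh'_def]
  rw [hset, Set.ncard_coe_finset]
  have haux := aux_bound n hn h' (fun i => hh _) q hq M hM t
  have hG : gcd (Finset.univ.gcd h') q = Finset.univ.gcd h := by
    rw [hh'_def, hq_def]
    exact (gcd_decomp n h).symm
  rw [hG] at haux
  have hq' : (0:ℝ) < (q:ℝ) := by exact_mod_cast hq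
  rw [show (4:ℝ)^n * ((M:ℝ)^n * ((Finset.univ.gcd h : ℤ):ℝ) / (q:ℝ) + (M:ℝ)^(n-1))
      = ((4:ℝ)^n * ((M:ℝ)^n * ((Finset.univ.gcd h : ℤ):ℝ) + (M:ℝ)^(n-1) * (q:ℝ))) / (q:ℝ) by
        field_simp]
  rw [le_div_iff₀ hq']
  exact_mod_cast haux
end

section
/- Let ℓ ≥ 2 be an integer. There exists a constant C > 0 depending only on ℓ such that for all positive integers h_1, …, h_ℓ, all M ∈ ℕ, and all t ∈ ℤ, the number of tuples (m_1, …, m_ℓ) ∈ [±M]^{ℓ} with h_1·m_1 + ⋯ + h_ℓ·m_ℓ = t is at most C·(M^{ℓ−1}·gcd(h_1, …, h_ℓ)/h_ℓ + M^{ℓ−2}). -/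
open Finset


lemma ap_count (q : ℤ) (hq : 0 < q) (x0 : ℤ) (M : ℕ) :
    (((Finset.Icc (-(M:ℤ)) M).filter (fun x => q ∣ (x - x0))).card * q : ℤ) ≤ 2 * M + q := by
  set lo : ℤ := -((M + x0) / q) with hlo
  set hi : ℤ := (M - x0) / q with hhi
  have hqne : q ≠ 0 := hq.ne'
  have hsub : (Finset.Icc (-(M:ℤ)) M).filter (fun x => q ∣ (x - x0)) ⊆
      (Finset.Icc lo hi).image (fun y => x0 + q * y) := by
    intro x hx
    simp only [Finset.mem_filter, Finset.mem_Icc] at hx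
    obtain ⟨⟨h1, h2⟩, hd⟩ := hx
    have hc : (x - x0) / q * q = x - x0 := Int.ediv_mul_cancel hd
    refine Finset.mem_image.2 ⟨(x - x0) / q, ?_, ?_⟩
    · rw [Finset.mem_Icc]
      constructor
      · rw [hlo, neg_le]
        rw [Int.le_ediv_iff_mul_le hq]
        nlinarith [hc]
      · rw [hhi, Int.le_ediv_iff_mul_le hq, hc]
        linarith
    · rw [mul_comm, hc]; ring
  have hcard := (Finset.card_le_card hsub).trans (Finset.card_image_le)
  rw [Int.card_Icc] at hcard
  rcases le_or_gt (hi + 1 - lo) 0 with hle | hpos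
  · have : (hi + 1 - lo).toNat = 0 := Int.toNat_of_nonpos hle
    rw [this] at hcard
    have : ((Finset.Icc (-(M:ℤ)) M).filter (fun x => q ∣ (x - x0))).card = 0 := le_antisymm hcard (Nat.zero_le _)
    simp only [this, Nat.cast_zero, zero_mul]
    positivity
  · have htn : ((hi + 1 - lo).toNat : ℤ) = hi + 1 - lo := Int.toNat_of_nonneg hpos.le
    have hcard' : (((Finset.Icc (-(M:ℤ)) M).filter (fun x => q ∣ (x - x0))).card : ℤ) ≤ hi + 1 - lo := by
      rw [← htn]; exact_mod_cast hcard
    have h1 : hi * q ≤ M - x0 := Int.ediv_mul_le _ hqne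
    have h2 : (M + x0) / q * q ≤ M + x0 := Int.ediv_mul_le _ hqne
    have hlo' : -lo * q ≤ M + x0 := by rw [hlo, neg_neg]; exact h2
    nlinarith [hcard', mul_le_mul_of_nonneg_right hcard' hq.le]



lemma cong_count (a q : ℤ) (hq : 0 < q) (b : ℤ) (M : ℕ) :
    (((Finset.Icc (-(M:ℤ)) M).filter (fun x => q ∣ (b - a * x))).card * q : ℤ)
      ≤ 2 * M * Int.gcd a q + q := by
  set A := (Finset.Icc (-(M:ℤ)) M).filter (fun x => q ∣ (b - a * x)) with hA
  rcases A.eq_empty_or_nonempty with he | ⟨x0, hx0⟩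
  · rw [he]; simp; positivity
  · set γ : ℤ := (Int.gcd a q : ℤ) with hγ
    have hγpos : 0 < γ := by
      have h0 : Int.gcd a q ≠ 0 := by
        simp only [ne_eq, Int.gcd_eq_zero_iff, not_and_or]
        right; exact hq.ne'
      rw [hγ]; exact_mod_cast Nat.pos_of_ne_zero h0
    have hγa : γ ∣ a := Int.gcd_dvd_left a q
    have hγq : γ ∣ q := Int.gcd_dvd_right a q
    set q' : ℤ := q / γ with hq'
    set a' : ℤ := a / γ with ha'
    have hqfac : q = γ * q' := by rw [hq', Int.mul_ediv_cancel' hγq]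
    have hafac : a = γ * a' := by rw [ha', Int.mul_ediv_cancel' hγa]
    have hq'pos : 0 < q' := by
      rcases lt_trichotomy q' 0 with h | h | h
      · nlinarith [hqfac]
      · rw [h, mul_zero] at hqfac; exact absurd hqfac.symm hq.ne
      · exact h
    have hcop : Int.gcd a' q' = 1 := Int.gcd_div_gcd_div_gcd (by rw [hγ] at hγpos; exact_mod_cast hγpos)
    -- A ⊆ filter (q' ∣ · - x0)
    have hsub : A ⊆ (Finset.Icc (-(M:ℤ)) M).filter (fun x => q' ∣ (x - x0)) := by
      intro x hx
      rw [hA, Finset.mem_filter] at hx hx0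
      rw [Finset.mem_filter]
      refine ⟨hx.1, ?_⟩
      have hd : q ∣ a * (x - x0) := by
        have := dvd_sub hx0.2 hx.2
        have heq : (b - a * x0) - (b - a * x) = a * (x - x0) := by ring
        rwa [heq] at this
      rw [hqfac, hafac] at hd
      have hd2 : q' ∣ a' * (x - x0) := by
        rw [mul_assoc] at hd
        exact (mul_dvd_mul_iff_left hγpos.ne').mp hd
      have : q' ∣ (x - x0) * a' := by rwa [mul_comm] at hd2
      exact (Int.isCoprime_iff_gcd_eq_one.2 (by rwa [Int.gcd_comm])).dvd_of_dvd_mul_right this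
    have hcard : (A.card : ℤ) ≤ ((Finset.Icc (-(M:ℤ)) M).filter (fun x => q' ∣ (x - x0))).card :=
      by exact_mod_cast Finset.card_le_card hsub
    have hap := ap_count q' hq'pos x0 M
    calc (A.card : ℤ) * q = (A.card : ℤ) * q' * γ := by rw [hqfac]; ring
      _ ≤ (((Finset.Icc (-(M:ℤ)) M).filter (fun x => q' ∣ (x - x0))).card * q') * γ := by
          apply mul_le_mul_of_nonneg_right _ hγpos.le
          exact mul_le_mul_of_nonneg_right hcard hq'pos.le
      _ ≤ (2 * M + q') * γ := mul_le_mul_of_nonneg_right hap hγpos.le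
      _ = 2 * M * γ + q := by rw [hqfac]; ring

noncomputable def sol' (k : ℕ) (h : Fin k → ℤ) (M : ℕ) (t : ℤ) : Finset (Fin k → ℤ) :=
  (Fintype.piFinset fun _ : Fin k => Finset.Icc (-(M:ℤ)) M).filter fun m => ∑ i, h i * m i = t

lemma fgcd_nonneg_s16 {α : Type*} (s : Finset α) (f : α → ℤ) : 0 ≤ s.gcd f := by
  rw [← Finset.normalize_gcd, ← Int.abs_eq_normalize]; exact abs_nonneg _

lemma fgcd_pos_of_pos {k : ℕ} (h : Fin k → ℤ) (hpos : ∀ i, 0 < h i) (i0 : Fin k) :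
    0 < Finset.univ.gcd h := by
  rcases eq_or_lt_of_le (fgcd_nonneg_s16 Finset.univ h) with h0 | h0
  · have := Finset.gcd_eq_zero_iff.1 h0.symm i0 (Finset.mem_univ i0)
    exact absurd this (hpos i0).ne'
  · exact h0

lemma base_case (h : Fin 2 → ℤ) (hpos : ∀ i, 0 < h i) (M : ℕ) (hM : 0 < M) (t : ℤ) :
    ((sol' 2 h M t).card : ℤ) * h (Fin.last 1) ≤
      2 * ((M:ℤ)^1 * Finset.univ.gcd h + (M:ℤ)^0 * h (Fin.last 1)) := by
  have hl1 : (Fin.last 1 : Fin 2) = 1 := rfl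
  set A := (Finset.Icc (-(M:ℤ)) M).filter (fun x => h 1 ∣ (t - h 0 * x)) with hA
  have hcard : (sol' 2 h M t).card ≤ A.card := by
    apply Finset.card_le_card_of_injOn (fun m => m 0)
    · intro m hm
      rw [sol', Finset.mem_coe, Finset.mem_filter, Fintype.mem_piFinset] at hm
      obtain ⟨hbox, hsum⟩ := hm
      rw [hA, Finset.mem_coe, Finset.mem_filter]
      refine ⟨hbox 0, ?_⟩
      rw [Fin.sum_univ_two] at hsum
      exact ⟨m 1, by linarith [hsum]⟩
    · intro m hm m' hm' heq
      simp only [sol', Finset.mem_coe, Finset.mem_filter] at hm hm'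
      have h1 : h 1 * m 1 = h 1 * m' 1 := by
        have e1 := hm.2; have e2 := hm'.2
        rw [Fin.sum_univ_two] at e1 e2
        simp only at heq
        rw [heq] at e1
        linarith [e1, e2]
      have : m 1 = m' 1 := by
        have := mul_left_cancel₀ (hpos 1).ne' h1
        exact this
      funext i
      fin_cases i
      · exact heq
      · exact this
  have hgcd : ((Int.gcd (h 0) (h 1) : ℤ)) = Finset.univ.gcd h := by
    apply Int.dvd_antisymm (by positivity) (fgcd_nonneg_s16 _ _)
    · apply Finset.dvd_gcd
      intro i _
      fin_cases i
      · exact Int.gcd_dvd_left _ _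
      · exact Int.gcd_dvd_right _ _
    · exact Int.dvd_coe_gcd (Finset.gcd_dvd (Finset.mem_univ 0)) (Finset.gcd_dvd (Finset.mem_univ 1))
  have hcc := cong_count (h 0) (h 1) (hpos 1) t M
  rw [← hA] at hcc
  have hfin : ((sol' 2 h M t).card : ℤ) * h 1 ≤ (A.card : ℤ) * h 1 :=
    mul_le_mul_of_nonneg_right (by exact_mod_cast hcard) (hpos 1).le
  rw [hl1]
  have hM1 : (1:ℤ) ≤ (M:ℤ) := by exact_mod_cast hM
  have hg0 : (0:ℤ) ≤ Finset.univ.gcd h := fgcd_nonneg_s16 _ _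
  rw [← hgcd]
  nlinarith [hfin, hcc, hpos 1, hM1]

lemma step_case (k : ℕ) (C : ℕ) (hC : 0 < C)
    (IH : ∀ (h : Fin (k+2) → ℤ), (∀ i, 0 < h i) → ∀ M : ℕ, 0 < M → ∀ t : ℤ,
      ((sol' (k+2) h M t).card : ℤ) * h (Fin.last (k+1)) ≤
        C * ((M:ℤ)^(k+1) * Finset.univ.gcd h + (M:ℤ)^k * h (Fin.last (k+1))))
    (h : Fin (k+3) → ℤ) (hpos : ∀ i, 0 < h i) (M : ℕ) (hM : 0 < M) (t : ℤ) :
    ((sol' (k+3) h M t).card : ℤ) * h (Fin.last (k+2)) ≤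
      (6*C) * ((M:ℤ)^(k+2) * Finset.univ.gcd h + (M:ℤ)^(k+1) * h (Fin.last (k+2))) := by
  set hl : ℤ := h (Fin.last (k+2)) with hhl
  set g : ℤ := Finset.univ.gcd h with hg
  set h' : Fin (k+2) → ℤ := fun i => h i.succ with hh'
  set d : ℤ := Finset.univ.gcd h' with hd
  have hposl : 0 < hl := hpos _
  have hdpos : 0 < d := fgcd_pos_of_pos h' (fun i => hpos _) 0
  have hgpos : 0 < g := fgcd_pos_of_pos h hpos 0
  have hdl : d ∣ hl := by
    have h2 : d ∣ h' (Fin.last (k+1)) := Finset.gcd_dvd (Finset.mem_univ _)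
    have h3 : h' (Fin.last (k+1)) = hl := by
      show h (Fin.last (k+1)).succ = h (Fin.last (k+2))
      rw [Fin.succ_last]
    rwa [h3] at h2
  have hdle : d ≤ hl := Int.le_of_dvd hposl hdl
  have hgd : g ∣ d := by
    apply Finset.dvd_gcd
    intro i _
    exact Finset.gcd_dvd (Finset.mem_univ _)
  have hgle : g ≤ d := Int.le_of_dvd hdpos hgd
  set A := (Finset.Icc (-(M:ℤ)) M).filter (fun x => d ∣ (t - h 0 * x)) with hA
  -- gcd(h 0, d) = g
  have hgcd0 : ((Int.gcd (h 0) d : ℤ)) = g := by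
    apply Int.dvd_antisymm (by positivity) (fgcd_nonneg_s16 _ _)
    · apply Finset.dvd_gcd
      intro i _
      induction i using Fin.cases with
      | zero => exact Int.gcd_dvd_left _ _
      | succ j => exact dvd_trans (Int.gcd_dvd_right _ _) (Finset.gcd_dvd (f := h') (Finset.mem_univ j))
    · exact Int.dvd_coe_gcd (Finset.gcd_dvd (Finset.mem_univ 0)) hgd
  -- injection into sigma
  have hinj : (sol' (k+3) h M t).card ≤
      (A.sigma (fun x => sol' (k+2) h' M (t - h 0 * x))).card := by
    apply Finset.card_le_card_of_injOn (fun m => ⟨m 0, Fin.tail m⟩)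
    · intro m hm
      rw [sol', Finset.mem_coe, Finset.mem_filter, Fintype.mem_piFinset] at hm
      obtain ⟨hbox, hsum⟩ := hm
      rw [Fin.sum_univ_succ] at hsum
      have hsum' : ∑ i : Fin (k+2), h' i * (Fin.tail m) i = t - h 0 * m 0 := by
        simp only [hh', Fin.tail]
        linarith [hsum]
      rw [Finset.mem_coe, Finset.mem_sigma]
      constructor
      · rw [hA, Finset.mem_filter]
        refine ⟨hbox 0, ?_⟩
        rw [← hsum']
        apply Finset.dvd_sum
        intro i _
        exact Dvd.dvd.mul_right (Finset.gcd_dvd (Finset.mem_univ i)) _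
      · rw [sol', Finset.mem_filter, Fintype.mem_piFinset]
        exact ⟨fun i => hbox i.succ, hsum'⟩
    · intro m hm m' hm' heq
      simp only [Sigma.mk.inj_iff, heq_eq_eq] at heq
      obtain ⟨h0eq, htl⟩ := heq
      rw [← Fin.cons_self_tail m, ← Fin.cons_self_tail m', h0eq, htl]
  rw [Finset.card_sigma] at hinj
  -- bound each inner card
  have hlast' : h' (Fin.last (k+1)) = hl := by
    show h (Fin.last (k+1)).succ = h (Fin.last (k+2))
    rw [Fin.succ_last]
  set B : ℤ := C * ((M:ℤ)^(k+1) * d + (M:ℤ)^k * hl) with hB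
  have hBpos : 0 ≤ B := by positivity
  have hinner : ∀ x, ((sol' (k+2) h' M (t - h 0 * x)).card : ℤ) * hl ≤ B := by
    intro x
    have := IH h' (fun i => hpos _) M hM (t - h 0 * x)
    rwa [hlast', ← hd] at this
  -- sum bound
  have hsum_bound : ((sol' (k+3) h M t).card : ℤ) * hl ≤ (A.card : ℤ) * B := by
    have h1 : ((sol' (k+3) h M t).card : ℤ) * hl ≤
        (∑ x ∈ A, ((sol' (k+2) h' M (t - h 0 * x)).card : ℤ)) * hl := by
      apply mul_le_mul_of_nonneg_right _ hposl.le
      exact_mod_cast hinj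
    have h2 : (∑ x ∈ A, ((sol' (k+2) h' M (t - h 0 * x)).card : ℤ)) * hl =
        ∑ x ∈ A, ((sol' (k+2) h' M (t - h 0 * x)).card : ℤ) * hl := Finset.sum_mul ..
    rw [h2] at h1
    refine h1.trans ?_
    calc ∑ x ∈ A, ((sol' (k+2) h' M (t - h 0 * x)).card : ℤ) * hl
        ≤ ∑ _x ∈ A, B := Finset.sum_le_sum (fun x _ => hinner x)
      _ = (A.card : ℤ) * B := by rw [Finset.sum_const, nsmul_eq_mul]
  -- count A
  have hAcount : (A.card : ℤ) * d ≤ 2 * M * g + d := by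
    have := cong_count (h 0) d hdpos t M
    rwa [← hA, hgcd0] at this
  -- final arithmetic
  have hM1 : (1:ℤ) ≤ (M:ℤ) := by exact_mod_cast hM
  set P : ℤ := (M:ℤ)^k with hP
  have hPpos : 0 < P := by positivity
  have hpow1 : (M:ℤ)^(k+1) = (M:ℤ) * P := by rw [hP, pow_succ]; ring
  have hpow2 : (M:ℤ)^(k+2) = (M:ℤ) * (M:ℤ) * P := by rw [hP, pow_succ, pow_succ]; ring
  rw [hpow1, hpow2]
  rw [hpow1] at hB
  have key : ((sol' (k+3) h M t).card : ℤ) * hl * d ≤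
      ((6*C) * ((M:ℤ) * (M:ℤ) * P * g + (M:ℤ) * P * hl)) * d := by
    calc ((sol' (k+3) h M t).card : ℤ) * hl * d ≤ ((A.card : ℤ) * B) * d :=
          mul_le_mul_of_nonneg_right hsum_bound hdpos.le
      _ = ((A.card : ℤ) * d) * B := by ring
      _ ≤ (2 * M * g + d) * B := mul_le_mul_of_nonneg_right hAcount hBpos
      _ ≤ ((6*C) * ((M:ℤ) * (M:ℤ) * P * g + (M:ℤ) * P * hl)) * d := by
          rw [hB]
          have hCpos : (0:ℤ) < (C:ℤ) := by exact_mod_cast hC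
          have hCpos2 : (0:ℤ) < (C:ℤ) := hCpos
          nlinarith [mul_nonneg (mul_nonneg (mul_nonneg (mul_nonneg hCpos.le (by positivity : (0:ℤ) ≤ (M:ℤ))) hPpos.le) hposl.le) (sub_nonneg.2 hgle),
            mul_nonneg (mul_nonneg (mul_nonneg (mul_nonneg hCpos.le (by positivity : (0:ℤ) ≤ (M:ℤ))) hPpos.le) hdpos.le) (sub_nonneg.2 hdle),
            mul_nonneg (mul_nonneg (mul_nonneg (mul_nonneg hCpos.le hPpos.le) hdpos.le) hposl.le) (sub_nonneg.2 hM1),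
            mul_nonneg (mul_nonneg (mul_nonneg (mul_nonneg (mul_nonneg hCpos.le (by positivity : (0:ℤ) ≤ (M:ℤ))) (by positivity : (0:ℤ) ≤ (M:ℤ))) hPpos.le) hgpos.le) hdpos.le,
            mul_nonneg (mul_nonneg (mul_nonneg (mul_nonneg hCpos.le (by positivity : (0:ℤ) ≤ (M:ℤ))) hPpos.le) hposl.le) hdpos.le]
  exact le_of_mul_le_mul_right key hdpos

lemma main_count (k : ℕ) : ∃ C : ℕ, 0 < C ∧ ∀ (h : Fin (k+2) → ℤ), (∀ i, 0 < h i) →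
    ∀ M : ℕ, 0 < M → ∀ t : ℤ,
    ((sol' (k+2) h M t).card : ℤ) * h (Fin.last (k+1)) ≤
      C * ((M:ℤ)^(k+1) * Finset.univ.gcd h + (M:ℤ)^k * h (Fin.last (k+1))) := by
  induction k with
  | zero =>
    exact ⟨2, by norm_num, fun h hpos M hM t => by exact_mod_cast base_case h hpos M hM t⟩
  | succ k IH =>
    obtain ⟨C, hC, hIH⟩ := IH
    refine ⟨6*C, by positivity, fun h hpos M hM t => ?_⟩
    have := step_case k C hC hIH h hpos M hM t
    exact_mod_cast this

/-- Bound on the number of solutions to a linear equation (Corollary 6.2 of the paper).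
Here `ℓ = n + 1 ≥ 2`. -/
theorem stmt16 (n : ℕ) (hn : 1 ≤ n) :
    ∃ C : ℝ, 0 < C ∧
      ∀ (h : Fin (n + 1) → ℤ), (∀ i, 0 < h i) →
      ∀ (M : ℕ), 0 < M → ∀ t : ℤ,
        (Set.ncard {m : Fin (n + 1) → ℤ |
            (∀ i, -(M : ℤ) ≤ m i ∧ m i ≤ (M : ℤ)) ∧
            (∑ i, h i * m i) = t} : ℝ) ≤
          C * ((M : ℝ) ^ n * (((Finset.univ.gcd h : ℤ) : ℝ)) / (h (Fin.last n) : ℝ) +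
            (M : ℝ) ^ (n - 1)) := by
  obtain ⟨k, rfl⟩ : ∃ k, n = k + 1 := ⟨n - 1, by omega⟩
  obtain ⟨C, hC, hmain⟩ := main_count k
  refine ⟨C, by exact_mod_cast hC, fun h hpos M hM t => ?_⟩
  have hset : {m : Fin (k + 2) → ℤ |
      (∀ i, -(M : ℤ) ≤ m i ∧ m i ≤ (M : ℤ)) ∧ (∑ i, h i * m i) = t} =
      ↑(sol' (k+2) h M t) := by
    ext m
    simp [sol', Fintype.mem_piFinset, Finset.mem_Icc, forall_and]
  rw [hset, Set.ncard_coe_finset]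
  have hint := hmain h hpos M hM t
  have hlpos : (0:ℝ) < (h (Fin.last (k+1)) : ℝ) := by exact_mod_cast hpos (Fin.last (k+1))
  have hreal : ((sol' (k+2) h M t).card : ℝ) * (h (Fin.last (k+1)) : ℝ) ≤
      C * ((M:ℝ)^(k+1) * ((Finset.univ.gcd h : ℤ) : ℝ) + (M:ℝ)^k * (h (Fin.last (k+1)) : ℝ)) := by
    exact_mod_cast hint
  have hdiv : ((sol' (k+2) h M t).card : ℝ) ≤
      C * ((M:ℝ)^(k+1) * ((Finset.univ.gcd h : ℤ) : ℝ) + (M:ℝ)^k * (h (Fin.last (k+1)) : ℝ)) /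
        (h (Fin.last (k+1)) : ℝ) := (le_div_iff₀ hlpos).2 hreal
  refine hdiv.trans (le_of_eq ?_)
  have hk : k + 1 - 1 = k := by omega
  rw [hk]
  field_simp
end
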